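/- Let N be a reticulation-visible network. Then for every reticulation node r of N, every parent of r is a tree node and hence lies in some tree node component of N; moreover the unique child c(r) of r is a tree node that is the root of a tree node component of N, and for every parent p of r, the tree node component rooted at c(r) is below the tree node component containing p. -/

import Mathlib

/-!
Framework for rooted phylogenetic networks, formalized as directed graphs
given by an adjacency relation `A : V → V → Prop` on a vertex type `V`,
with a distinguished root `ρ`.  Leaves are identified with their (unique)
labels, i.e. the labelling is the identity on leaf vertices.
-/

namespace PhyloNet

variable {V : Type} {W : Type}

/-- Indegree of a vertex. -/
noncomputable def inDeg (A : V → V → Prop) (v : V) : ℕ := {u | A u v}.ncard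

/-- Outdegree of a vertex. -/
noncomputable def outDeg (A : V → V → Prop) (v : V) : ℕ := {w | A v w}.ncard

/-- `p` is a directed path (walk) from `u` to `v`, given as the list of its vertices. -/
def IsPath (A : V → V → Prop) (u v : V) (p : List V) : Prop :=
  p.Chain' A ∧ p.head? = some u ∧ p.getLast? = some v

/-- `A` with root `ρ` is a phylogenetic network: a finite rooted acyclic digraph whose
root has indegree 0 and outdegree ≥ 2, from which every node is reachable, and in which
every non-root node is either a leaf (indegree 1, outdegree 0), an internal tree node
(indegree 1, outdegree ≥ 2) or a reticulation (indegree ≥ 2, outdegree 1). -/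
structure IsNetwork (A : V → V → Prop) (ρ : V) : Prop where
  finite : Finite V
  acyclic : ∀ v, ¬ Relation.TransGen A v v
  root_indeg : inDeg A ρ = 0
  root_outdeg : 2 ≤ outDeg A ρ
  reach_from_root : ∀ v, Relation.ReflTransGen A ρ v
  degree_cond : ∀ v, v ≠ ρ →
    (inDeg A v = 1 ∧ (outDeg A v = 0 ∨ 2 ≤ outDeg A v)) ∨ (2 ≤ inDeg A v ∧ outDeg A v = 1)

/-- Reticulation node: indegree ≥ 2 and outdegree 1. -/
def IsRet (A : V → V → Prop) (v : V) : Prop := 2 ≤ inDeg A v ∧ outDeg A v = 1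

/-- Leaf: indegree 1 and outdegree 0. -/
def IsLeaf (A : V → V → Prop) (v : V) : Prop := inDeg A v = 1 ∧ outDeg A v = 0

/-- Tree node: any node that is not a reticulation node. -/
def IsTreeNode (A : V → V → Prop) (v : V) : Prop := ¬ IsRet A v

/-- `u` is visible on `v`: every directed path from the root `ρ` to `v` contains `u`. -/
def Visible (A : V → V → Prop) (ρ u v : V) : Prop := ∀ p, IsPath A ρ v p → u ∈ p

/-- A network is reticulation-visible if every reticulation node is visible on some leaf. -/
def RetVisible (A : V → V → Prop) (ρ : V) : Prop :=
  ∀ r, IsRet A r → ∃ ℓ, IsLeaf A ℓ ∧ Visible A ρ r ℓ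

/-- Undirected adjacency in the subgraph `N − R(N)` induced on tree nodes. -/
def TAdj (A : V → V → Prop) (u v : V) : Prop :=
  IsTreeNode A u ∧ IsTreeNode A v ∧ (A u v ∨ A v u)

/-- `S` is a tree node component: a connected component (ignoring directions) of the
subgraph induced on the tree nodes. -/
def IsTNC (A : V → V → Prop) (S : Set V) : Prop :=
  ∃ u, IsTreeNode A u ∧ S = {v | Relation.ReflTransGen (TAdj A) u v}

/-- `r` is the root of the tree node component `S`: it lies in `S` and has indegree 0
within `N − R(N)`, i.e. it has no tree-node parent. -/
def CompRoot (A : V → V → Prop) (S : Set V) (r : V) : Prop :=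
  r ∈ S ∧ ∀ u, IsTreeNode A u → ¬ A u r

/-- Tree node component `C'` is below tree node component `C''`. -/
def Below (A : V → V → Prop) (C' C'' : Set V) : Prop :=
  ∃ r, IsRet A r ∧ (∃ c, A r c ∧ CompRoot A C' c) ∧ (∃ p ∈ C'', A p r)

/-- A big tree node component: a tree node component with at least two nodes. -/
def BigTNC (A : V → V → Prop) (C : Set V) : Prop :=
  IsTNC A C ∧ ∃ a ∈ C, ∃ b ∈ C, a ≠ b

/-- A single-leaf component: its node set is `{ℓ}` for some leaf `ℓ`. -/
def SingleLeafTNC (A : V → V → Prop) (C : Set V) : Prop :=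
  ∃ ℓ, IsLeaf A ℓ ∧ C = {ℓ}

/-- A lowest big tree node component: a big tree node component `C` such that every
tree node component whose root is a proper descendant of the root of `C` is a
single-leaf component. -/
def LowestBig (A : V → V → Prop) (C : Set V) : Prop :=
  BigTNC A C ∧ ∀ C' r' rC, IsTNC A C' → CompRoot A C' r' → CompRoot A C rC →
    Relation.TransGen A rC r' → SingleLeafTNC A C'

/-- An inner reticulation: all of its parents lie in one and the same tree node component. -/
def InnerRet (A : V → V → Prop) (r : V) : Prop :=
  IsRet A r ∧ ∃ S, IsTNC A S ∧ ∀ p, A p r → p ∈ S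

/-- `IR(C)`: reticulations all of whose parents lie in `C`. -/
def IRset (A : V → V → Prop) (C : Set V) : Set V :=
  {r | IsRet A r ∧ ∀ p, A p r → p ∈ C}

/-- `CR(C)`: reticulations with at least one parent in `C` and at least one parent outside `C`. -/
def CRset (A : V → V → Prop) (C : Set V) : Set V :=
  {r | IsRet A r ∧ (∃ p, A p r ∧ p ∈ C) ∧ (∃ p, A p r ∧ p ∉ C)}

/-- `L_C`: the leaves of the network lying in `C` together with the children of the
inner reticulations below `C`. -/
def LCset (A : V → V → Prop) (C : Set V) : Set V :=
  {ℓ | ℓ ∈ C ∧ IsLeaf A ℓ} ∪ {x | ∃ r ∈ IRset A C, A r x}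

/-- Bicombining: every reticulation node has indegree exactly 2. -/
def Bicombining (A : V → V → Prop) : Prop := ∀ r, IsRet A r → inDeg A r = 2

/-- Galled: every reticulation node `r` has an ancestor `u` admitting two
internal-node-disjoint directed paths from `u` to `r` in which every node other
than `r` is a tree node. -/
def Galled (A : V → V → Prop) : Prop :=
  ∀ r, IsRet A r → ∃ u, Relation.TransGen A u r ∧ ∃ p₁ p₂ : List V,
    IsPath A u r p₁ ∧ IsPath A u r p₂ ∧ p₁ ≠ p₂ ∧
    (∀ x, x ∈ p₁ → x ∈ p₂ → x = u ∨ x = r) ∧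
    (∀ x ∈ p₁, x ≠ r → IsTreeNode A x) ∧ (∀ x ∈ p₂, x ≠ r → IsTreeNode A x)

/-- Restriction of a digraph to a vertex subset. -/
def Restrict (A : V → V → Prop) (S : Set V) : V → V → Prop :=
  fun a b => a ∈ S ∧ b ∈ S ∧ A a b

/-- Descendants of `u` (including `u`); the vertex set of the subnetwork `D_N(u)`. -/
def Desc (A : V → V → Prop) (u : V) : Set V := {v | Relation.ReflTransGen A u v}

/-- Binary network: the root has outdegree 2, leaves have degree 1, and every other
node has total degree 3. -/
def IsBinary (A : V → V → Prop) (ρ : V) : Prop :=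
  outDeg A ρ = 2 ∧ ∀ v, v ≠ ρ →
    (inDeg A v = 1 ∧ outDeg A v = 0) ∨ (inDeg A v = 1 ∧ outDeg A v = 2) ∨
    (inDeg A v = 2 ∧ outDeg A v = 1)

/-- A phylogenetic tree: a network with no reticulation nodes. -/
def IsPhyloTree (A : W → W → Prop) (ρ : W) : Prop :=
  IsNetwork A ρ ∧ ∀ w, ¬ IsRet A w

/-- A node with indegree 1 and outdegree 1 (a suppressible node). -/
def Deg11 (A : V → V → Prop) (v : V) : Prop := inDeg A v = 1 ∧ outDeg A v = 1

/-- There is a directed path from `a` to `b` (of length ≥ 1) all of whose internal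
nodes are suppressible. -/
def SubdivPath (A : V → V → Prop) (a b : V) : Prop :=
  ∃ p : List V, IsPath A a b p ∧ 2 ≤ p.length ∧ ∀ z ∈ p, z ≠ a → z ≠ b → Deg11 A z

/-- `φ` witnesses that the digraph `A'` on the vertex set `S` is a subdivision of the
tree `AT` restricted to the vertex set `SW`: `φ` injectively maps the tree nodes onto
the non-suppressible nodes, edges of the tree correspond exactly to directed paths
whose internal nodes are suppressible, and leaves are mapped according to the leaf
correspondence `θ` (same labels). -/
def SubdivWitness (A' : V → V → Prop) (S : Set V) (AT : W → W → Prop) (SW : Set W)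
    (θ : W → V) (φ : W → V) : Prop :=
  Set.InjOn φ SW ∧ (∀ w ∈ SW, φ w ∈ S) ∧
  (∀ x ∈ S, ¬ Deg11 (Restrict A' S) x → ∃ w ∈ SW, φ w = x) ∧
  (∀ x ∈ SW, ∀ y ∈ SW, (Restrict AT SW x y ↔ SubdivPath (Restrict A' S) (φ x) (φ y))) ∧
  (∀ w ∈ SW, outDeg (Restrict AT SW) w = 0 → φ w = θ w)

/-- The digraph `A'` on vertex set `S` is a subdivision of the tree `AT` on `SW`. -/
def IsSubdivisionOf (A' : V → V → Prop) (S : Set V) (AT : W → W → Prop) (SW : Set W)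
    (θ : W → V) : Prop :=
  ∃ φ, SubdivWitness A' S AT SW θ φ

/-- `E`, `D`, `φ` witness that the subnetwork of `A` on vertex set `S` displays the
subtree of `AT` on vertex set `SW`: `E` is a set of reticulation edges of the
subnetwork containing all but one of the incoming edges of each reticulation node of
the subnetwork, `D` is a set of deleted nodes, and `φ` witnesses that the result is a
subdivision of the subtree. -/
def DisplayWitness (A : V → V → Prop) (S : Set V) (AT : W → W → Prop) (SW : Set W)
    (θ : W → V) (E : Set (V × V)) (D : Set V) (φ : W → V) : Prop :=
  (∀ e ∈ E, Restrict A S e.1 e.2 ∧ 2 ≤ inDeg (Restrict A S) e.2) ∧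
  (∀ r ∈ S, 2 ≤ inDeg (Restrict A S) r →
     ∃ p, Restrict A S p r ∧ (p, r) ∉ E ∧ ∀ q, Restrict A S q r → q ≠ p → (q, r) ∈ E) ∧
  SubdivWitness (fun a b => Restrict A S a b ∧ (a, b) ∉ E) (S \ D) AT SW θ φ

/-- The subnetwork of `A` on vertex set `S` displays the subtree of `AT` on `SW`. -/
def DisplaysOn (A : V → V → Prop) (S : Set V) (AT : W → W → Prop) (SW : Set W)
    (θ : W → V) : Prop :=
  ∃ E D φ, DisplayWitness A S AT SW θ E D φ

/-- The leaves of the subnetwork of `A` induced on vertex set `S`. -/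
def SubLeaves (A : V → V → Prop) (S : Set V) : Set V :=
  {v | v ∈ S ∧ outDeg (Restrict A S) v = 0}

/-- `B` is a soft cluster in the subnetwork of `A` on vertex set `S`: `B` is the
cluster of some node of some phylogenetic tree displayed by that subnetwork. -/
def SoftClusterOn (A : V → V → Prop) (S : Set V) (B : Set V) : Prop :=
  ∃ (W : Type) (AT : W → W → Prop) (ρT : W) (θ : W → V),
    IsPhyloTree AT ρT ∧
    Set.BijOn θ {w | IsLeaf AT w} (SubLeaves A S) ∧
    DisplaysOn A S AT Set.univ θ ∧
    ∃ x : W, θ '' {w | IsLeaf AT w ∧ Relation.ReflTransGen AT x w} = B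

/-- `B` is a soft cluster of the node `u` of `N`: there are `E` and `D` as in the
definition of display such that `u` is a node of `(N − E) − D` and the set of leaves
of `N` below `u` in `(N − E) − D` equals `B`. -/
def SoftClusterAt (A : V → V → Prop) (u : V) (B : Set V) : Prop :=
  ∃ (E : Set (V × V)) (D : Set V),
    (∀ e ∈ E, A e.1 e.2 ∧ 2 ≤ inDeg A e.2) ∧
    (∀ r, 2 ≤ inDeg A r → ∃ p, A p r ∧ (p, r) ∉ E ∧ ∀ q, A q r → q ≠ p → (q, r) ∈ E) ∧
    (∃ (W : Type) (AT : W → W → Prop) (ρT : W) (θ : W → V),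
      IsPhyloTree AT ρT ∧ Set.BijOn θ {w | IsLeaf AT w} {v | IsLeaf A v} ∧
      IsSubdivisionOf (fun a b => A a b ∧ (a, b) ∉ E) (Set.univ \ D) AT Set.univ θ) ∧
    u ∉ D ∧
    {ℓ | IsLeaf A ℓ ∧
      Relation.ReflTransGen (fun a b => A a b ∧ (a, b) ∉ E ∧ a ∉ D ∧ b ∉ D) u ℓ} = B

/-- `w` is the lowest common ancestor of the set `X` in the (tree-like) digraph `A`. -/
def IsLCAIn (A : V → V → Prop) (X : Set V) (w : V) : Prop :=
  (∀ x ∈ X, Relation.ReflTransGen A w x) ∧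
  ∀ w', (∀ x ∈ X, Relation.ReflTransGen A w' x) → Relation.ReflTransGen A w' w

end PhyloNet

namespace PhyloNet

private lemma exists_path_strong {V : Type} {A : V → V → Prop} {u v : V}
    (h : Relation.ReflTransGen A u v) :
    ∃ p, IsPath A u v p ∧ ∀ z ∈ p, Relation.ReflTransGen A u z ∧ Relation.ReflTransGen A z v := by
  induction h with
  | refl =>
    exact ⟨[u], ⟨List.isChain_singleton u, rfl, rfl⟩, by
      intro z hz; simp at hz; subst hz; exact ⟨Relation.ReflTransGen.refl, Relation.ReflTransGen.refl⟩⟩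
  | @tail b c hub hbc ih =>
    obtain ⟨p, ⟨hc, hh, hl⟩, hmem⟩ := ih
    have hpne : p ≠ [] := by intro h'; simp [h'] at hh
    refine ⟨p ++ [c], ⟨?_, ?_, ?_⟩, ?_⟩
    · refine List.IsChain.append hc (List.isChain_singleton c) ?_
      intro x hx y hy
      simp only [List.head?_cons, Option.mem_def, Option.some.injEq] at hy
      rw [hl] at hx
      simp only [Option.mem_def, Option.some.injEq] at hx
      subst hx; subst hy; exact hbc
    · rw [List.head?_append_of_ne_nil _ hpne]; exact hh
    · rw [List.getLast?_append]; rfl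
    · intro z hz
      rcases List.mem_append.1 hz with hz | hz
      · obtain ⟨h1, h2⟩ := hmem z hz
        exact ⟨h1, h2.tail hbc⟩
      · simp at hz; subst hz
        exact ⟨hub.tail hbc, Relation.ReflTransGen.refl⟩

private lemma exists_path_through {V : Type} {A : V → V → Prop} {ρ q m ℓ : V}
    (h1 : Relation.ReflTransGen A ρ q) (h2 : A q m) (h3 : Relation.ReflTransGen A m ℓ) :
    ∃ P, IsPath A ρ ℓ P ∧
      ∀ z ∈ P, Relation.ReflTransGen A z q ∨ Relation.ReflTransGen A m z := by
  obtain ⟨p1, ⟨c1, hh1, hl1⟩, hm1⟩ := exists_path_strong h1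
  obtain ⟨p2, ⟨c2, hh2, hl2⟩, hm2⟩ := exists_path_strong h3
  have hp1ne : p1 ≠ [] := by intro h'; simp [h'] at hh1
  have hp2ne : p2 ≠ [] := by intro h'; simp [h'] at hh2
  refine ⟨p1 ++ p2, ⟨?_, ?_, ?_⟩, ?_⟩
  · refine List.IsChain.append c1 c2 ?_
    intro x hx y hy
    rw [hl1] at hx; rw [hh2] at hy
    simp only [Option.mem_def, Option.some.injEq] at hx hy
    subst hx; subst hy; exact h2
  · rw [List.head?_append_of_ne_nil _ hp1ne]; exact hh1
  · rw [List.getLast?_append, hl2]; rfl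
  · intro z hz
    rcases List.mem_append.1 hz with hz | hz
    · exact Or.inl (hm1 z hz).2
    · exact Or.inr (hm2 z hz).1

private lemma only_child {V : Type} [Finite V] {A : V → V → Prop} {v w : V}
    (h1 : outDeg A v = 1) (h2 : A v w) : {x | A v x} = {w} := by
  obtain ⟨a, ha⟩ := Set.ncard_eq_one.1 h1
  rw [ha]
  have : w ∈ {x | A v x} := h2
  rw [ha] at this
  simp_all

private lemma only_parent {V : Type} [Finite V] {A : V → V → Prop} {v w : V}
    (h1 : inDeg A v = 1) (h2 : A w v) : {x | A x v} = {w} := by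
  obtain ⟨a, ha⟩ := Set.ncard_eq_one.1 h1
  rw [ha]
  have : w ∈ {x | A x v} := h2
  rw [ha] at this
  simp_all

private lemma other_parent {V : Type} [Finite V] {A : V → V → Prop} {v w : V}
    (h1 : 2 ≤ inDeg A v) (h2 : A w v) : ∃ q, A q v ∧ q ≠ w := by
  have h1' : 1 < {x | A x v}.ncard := by simp only [inDeg] at h1; omega
  obtain ⟨q, hq, hqw⟩ := Set.exists_ne_of_one_lt_ncard h1' w
  exact ⟨q, hq, hqw⟩

private lemma ret_child_not_multi {V : Type} {A : V → V → Prop} {ρ : V}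
    (hN : IsNetwork A ρ) (hRV : RetVisible A ρ) {x y : V}
    (hx : IsRet A x) (hxy : A x y) (hy : 2 ≤ inDeg A y) : False := by
  have : Finite V := hN.finite
  obtain ⟨ℓ, hℓ, hvis⟩ := hRV x hx
  -- x lies on some path to ℓ, hence x ⇝ ℓ, hence (only child) y ⇝ ℓ
  obtain ⟨P0, hP0, hm0⟩ := exists_path_strong (hN.reach_from_root ℓ)
  have hxℓ : Relation.ReflTransGen A x ℓ := (hm0 x (hvis P0 hP0)).2
  have hxneℓ : x ≠ ℓ := by
    intro h; subst h; have h1 := hx.2; have h2 := hℓ.2; omega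
  have hyℓ : Relation.ReflTransGen A y ℓ := by
    rcases hxℓ.cases_head with h | ⟨w, hw, hwℓ⟩
    · exact absurd h hxneℓ
    · have : w ∈ ({y} : Set V) := by rw [← only_child hx.2 hxy]; exact hw
      rw [Set.mem_singleton_iff] at this; rwa [this] at hwℓ
  -- y has another parent q ≠ x
  obtain ⟨q, hqy, hqx⟩ := other_parent hy hxy
  -- the path ρ ⇝ q → y ⇝ ℓ avoids x, contradicting visibility
  obtain ⟨P, hP, hm⟩ := exists_path_through (hN.reach_from_root q) hqy hyℓ
  rcases hm x (hvis P hP) with h | h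
  · rcases h.cases_head with h' | ⟨w, hw, hwq⟩
    · exact hqx h'.symm
    · have : w ∈ ({y} : Set V) := by rw [← only_child hx.2 hxy]; exact hw
      rw [Set.mem_singleton_iff] at this; rw [this] at hwq
      exact hN.acyclic y (Relation.TransGen.tail' hwq hqy)
  · exact hN.acyclic y (Relation.TransGen.tail' h hxy)

/-- In a reticulation-visible network, for every reticulation node `r`: every parent of
`r` is a tree node lying in some tree node component; the unique child of `r` is a
tree node that is the root of a tree node component; and for every parent `p` of `r`,
the component rooted at the child of `r` is below the component containing `p`. -/
theorem reticulation_between_components {V : Type} (A : V → V → Prop) (ρ : V)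
    (hN : IsNetwork A ρ) (hRV : RetVisible A ρ)
    (r : V) (hr : IsRet A r) :
    (∀ p, A p r → IsTreeNode A p ∧ ∃ S, IsTNC A S ∧ p ∈ S) ∧
    (∀ c, A r c → IsTreeNode A c ∧ ∃ S', IsTNC A S' ∧ CompRoot A S' c ∧
      ∀ p S, A p r → IsTNC A S → p ∈ S → Below A S' S) := by
  have : Finite V := hN.finite
  constructor
  · intro p hpr
    have htp : IsTreeNode A p := by
      intro hp
      exact ret_child_not_multi hN hRV hp hpr hr.1
    exact ⟨htp, {v | Relation.ReflTransGen (TAdj A) p v}, ⟨p, htp, rfl⟩,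
      Relation.ReflTransGen.refl⟩
  · intro c hrc
    have htc : IsTreeNode A c := by
      intro hc
      exact ret_child_not_multi hN hRV hr hrc hc.1
    have hcρ : c ≠ ρ := by
      intro h
      have h0 : 0 < inDeg A c := (Set.ncard_pos (Set.toFinite _)).2 ⟨r, hrc⟩
      rw [h, hN.root_indeg] at h0; omega
    have hin1 : inDeg A c = 1 := by
      rcases hN.degree_cond c hcρ with ⟨h1, _⟩ | h2
      · exact h1
      · exact absurd h2 htc
    have hcr : CompRoot A {v | Relation.ReflTransGen (TAdj A) c v} c := by
      refine ⟨Relation.ReflTransGen.refl, ?_⟩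
      intro u hu hAuc
      have : u ∈ ({r} : Set V) := by rw [← only_parent hin1 hrc]; exact hAuc
      rw [Set.mem_singleton_iff] at this
      rw [this] at hu
      exact hu hr
    exact ⟨htc, {v | Relation.ReflTransGen (TAdj A) c v}, ⟨c, htc, rfl⟩, hcr,
      fun p S hpr _ hpS => ⟨r, hr, ⟨c, hrc, hcr⟩, ⟨p, hpS, hpr⟩⟩⟩

end PhyloNet
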